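/- Let (a_n)_{n≥1} satisfy 0 < α ≤ a_n ≤ M, and for each n let f_n : ℝ → ℝ be C¹ and convex with |f_n(t)| ≤ β_n(1+t²) for all t, where (β_n) ∈ s. For x ∈ s set g_n(x) := a_n x_n + f_n'(x_n). If x^{(j)} → x in s (i.e. ‖x^{(j)} − x‖_k → 0 for every k ∈ ℕ), then for every compact subset K of s (with the topology induced by the norms ‖·‖_k), sup_{h ∈ K} | Σ_{n=1}^∞ (g_n(x^{(j)}) − g_n(x)) h_n | → 0 as j → ∞. In other words, the derivative map x ↦ (g_n(x))_n is continuous from s into the dual of s with the topology of uniform convergence on compact sets. -/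

import Mathlib

open Filter Topology

/-- The space `s` of rapidly decreasing sequences (indexed so that `x n` represents the
`(n+1)`-st term of the paper's sequence `(x_n)_{n ≥ 1}`). -/
def InS (x : ℕ → ℝ) : Prop :=
  ∀ k : ℕ, ∃ C : ℝ, ∀ n : ℕ, |x n| * ((n : ℝ) + 1) ^ k ≤ C

/-- `s` as a subspace of the space of all real sequences. -/
def Sspace : Submodule ℝ (ℕ → ℝ) where
  carrier := {x | InS x}
  add_mem' := by
    rintro x y hx hy k
    obtain ⟨Cx, hCx⟩ := hx k
    obtain ⟨Cy, hCy⟩ := hy k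
    refine ⟨Cx + Cy, fun n => ?_⟩
    have hpos : (0 : ℝ) ≤ ((n : ℝ) + 1) ^ k := by positivity
    have habs : |x n + y n| ≤ |x n| + |y n| := abs_add_le _ _
    calc |(x + y) n| * ((n : ℝ) + 1) ^ k
        = |x n + y n| * ((n : ℝ) + 1) ^ k := rfl
      _ ≤ (|x n| + |y n|) * ((n : ℝ) + 1) ^ k := by
          exact mul_le_mul_of_nonneg_right habs hpos
      _ = |x n| * ((n : ℝ) + 1) ^ k + |y n| * ((n : ℝ) + 1) ^ k := by ring
      _ ≤ Cx + Cy := add_le_add (hCx n) (hCy n)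
  zero_mem' := by
    intro k
    exact ⟨0, fun n => by simp⟩
  smul_mem' := by
    rintro c x hx k
    obtain ⟨C, hC⟩ := hx k
    refine ⟨|c| * C, fun n => ?_⟩
    calc |(c • x) n| * ((n : ℝ) + 1) ^ k
        = |c| * (|x n| * ((n : ℝ) + 1) ^ k) := by
          simp [abs_mul, mul_assoc]
      _ ≤ |c| * C := by
          exact mul_le_mul_of_nonneg_left (hC n) (abs_nonneg c)

/-- The map sending `x ∈ s` to the bounded sequence `(x_n n^k)_n`; the norms
`‖·‖_k` of `s` are realised as `‖·‖_∞` of these images. -/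
noncomputable def toBdd (k : ℕ) (x : Sspace) : BoundedContinuousFunction ℕ ℝ :=
  BoundedContinuousFunction.ofNormedAddCommGroupDiscrete
    (fun n => x.1 n * ((n : ℝ) + 1) ^ k) (Classical.choose (x.2 k))
    (fun n => by
      have h := Classical.choose_spec (x.2 k) n
      have hpos : (0 : ℝ) ≤ ((n : ℝ) + 1) ^ k := by positivity
      calc ‖x.1 n * ((n : ℝ) + 1) ^ k‖
          = |x.1 n| * ((n : ℝ) + 1) ^ k := by
            rw [Real.norm_eq_abs, abs_mul, abs_of_nonneg hpos]
        _ ≤ _ := h)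

/-- The topology of `s`, generated by the increasing family of norms
`‖x‖_k = sup_n |x_n| n^k`, `k ∈ ℕ`. -/
noncomputable def sTopology : TopologicalSpace Sspace :=
  ⨅ k : ℕ, TopologicalSpace.induced (toBdd k) inferInstance

/-- Abs bound on the derivative of a convex C¹ function with quadratic growth. -/
lemma deriv_abs_le_of_convex (f : ℝ → ℝ) (hf : ContDiff ℝ 1 f)
    (hc : ConvexOn ℝ Set.univ f) (b R : ℝ) (hb : 0 ≤ b) (hR : 0 ≤ R)
    (hg : ∀ t, |f t| ≤ b * (1 + t ^ 2)) {t : ℝ} (ht : |t| ≤ R) :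
    |deriv f t| ≤ b * (2 + (R + 1) ^ 2 + R ^ 2) := by
  have hd : ∀ s : ℝ, DifferentiableAt ℝ f s := fun s =>
    (hf.differentiable one_ne_zero).differentiableAt
  have h1 : deriv f t ≤ f (t + 1) - f t := by
    have := hc.deriv_le_slope (Set.mem_univ t) (Set.mem_univ (t + 1))
      (by linarith) (hd t)
    rwa [slope_def_field, add_sub_cancel_left, div_one] at this
  have h2 : f t - f (t - 1) ≤ deriv f t := by
    have := hc.slope_le_deriv (Set.mem_univ (t - 1)) (Set.mem_univ t)
      (by linarith) (hd t)
    rwa [slope_def_field, sub_sub_cancel, div_one] at this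
  obtain ⟨htl, htr⟩ := abs_le.mp ht
  have g0 := abs_le.mp (hg t)
  have g1 := abs_le.mp (hg (t + 1))
  have g2 := abs_le.mp (hg (t - 1))
  have k0 : t ^ 2 ≤ R ^ 2 := by nlinarith
  have k1 : (t + 1) ^ 2 ≤ (R + 1) ^ 2 := by nlinarith
  have k2 : (t - 1) ^ 2 ≤ (R + 1) ^ 2 := by nlinarith
  have m0 : b * t ^ 2 ≤ b * R ^ 2 := mul_le_mul_of_nonneg_left k0 hb
  have m1 : b * (t + 1) ^ 2 ≤ b * (R + 1) ^ 2 := mul_le_mul_of_nonneg_left k1 hb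
  have m2 : b * (t - 1) ^ 2 ≤ b * (R + 1) ^ 2 := mul_le_mul_of_nonneg_left k2 hb
  rw [abs_le]
  constructor
  · nlinarith [g0.1, g0.2, g2.1, g2.2]
  · nlinarith [g0.1, g0.2, g1.1, g1.2]

/-- A compact subset of `s` is bounded in each of the norms `‖·‖_k`. -/
lemma compact_bound (K : Set Sspace) (hK : @IsCompact _ sTopology K) (k : ℕ) :
    ∃ B : ℝ, 0 ≤ B ∧ ∀ h ∈ K, ∀ n : ℕ, |(h : ℕ → ℝ) n| * ((n : ℝ) + 1) ^ k ≤ B := by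
  have hcont : @Continuous _ _ sTopology _ (toBdd k) := by
    exact continuous_iInf_dom
      (t₁ := fun k : ℕ => TopologicalSpace.induced (toBdd k) inferInstance)
      (i := k) continuous_induced_dom
  have himg : IsCompact (toBdd k '' K) :=
    @IsCompact.image _ _ sTopology _ _ _ hK hcont
  obtain ⟨B, hB⟩ := himg.isBounded.exists_norm_le
  refine ⟨max B 0, le_max_right _ _, fun h hh n => ?_⟩
  have h1 : ‖toBdd k h‖ ≤ B := hB _ ⟨h, hh, rfl⟩
  have h2 : ‖(toBdd k h) n‖ ≤ ‖toBdd k h‖ :=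
    BoundedContinuousFunction.norm_coe_le_norm _ n
  have h3 : (toBdd k h) n = (h : ℕ → ℝ) n * ((n : ℝ) + 1) ^ k := rfl
  have hpos : (0 : ℝ) ≤ ((n : ℝ) + 1) ^ k := by positivity
  calc |(h : ℕ → ℝ) n| * ((n : ℝ) + 1) ^ k = ‖(toBdd k h) n‖ := by
        rw [h3, Real.norm_eq_abs, abs_mul, abs_of_nonneg hpos]
    _ ≤ B := h2.trans h1
    _ ≤ max B 0 := le_max_left _ _

lemma summable_inv_sq' : Summable (fun n : ℕ => (1 : ℝ) / ((n : ℝ) + 1) ^ 2) := by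
  have h : Summable (fun n : ℕ => (1 : ℝ) / (n : ℝ) ^ 2) :=
    Real.summable_one_div_nat_pow.mpr one_lt_two
  have := (summable_nat_add_iff (f := fun n : ℕ => (1 : ℝ) / (n : ℝ) ^ 2) 1).mpr h
  refine this.congr fun n => ?_
  push_cast
  ring

set_option maxHeartbeats 1000000 in
/-- if `x⁽ʲ⁾ → x` in `s`, then for every compact `K ⊆ s`,
`sup_{h ∈ K} |Σ (g_n(x⁽ʲ⁾) - g_n(x)) h_n| → 0`, where `g_n(x) = a_n x_n + f_n'(x_n)`:
the derivative map is continuous from `s` into its dual with the topology of uniform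
convergence on compact sets. -/
theorem stmt_6 (a β : ℕ → ℝ) (α M : ℝ) (f : ℕ → ℝ → ℝ)
    (hα : 0 < α) (ha : ∀ n, α ≤ a n ∧ a n ≤ M)
    (hC1 : ∀ n, ContDiff ℝ 1 (f n)) (hconv : ∀ n, ConvexOn ℝ Set.univ (f n))
    (hgrowth : ∀ n t, |f n t| ≤ β n * (1 + t ^ 2)) (hβ : InS β)
    (x : ℕ → ℝ) (hx : InS x) (xj : ℕ → ℕ → ℝ) (hxj : ∀ j, InS (xj j))
    (hconv_s : ∀ k : ℕ, ∀ ε > (0 : ℝ), ∃ J : ℕ, ∀ j ≥ J, ∀ n : ℕ,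
      |xj j n - x n| * ((n : ℝ) + 1) ^ k ≤ ε) :
    ∀ K : Set Sspace, @IsCompact _ sTopology K →
      ∀ ε > (0 : ℝ), ∃ J : ℕ, ∀ j ≥ J, ∀ h ∈ K,
        |∑' n : ℕ, ((a n * xj j n + deriv (f n) (xj j n)) -
            (a n * x n + deriv (f n) (x n))) * (h : ℕ → ℝ) n| ≤ ε := by
  intro K hK ε hε
  -- basic constants
  obtain ⟨Cx, hCx⟩ := hx 0
  have hCx' : ∀ n, |x n| ≤ Cx := fun n => by simpa using hCx n
  have hCx0 : 0 ≤ Cx := (abs_nonneg _).trans (hCx' 0)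
  obtain ⟨Cβ, hCβ⟩ := hβ 0
  have hCβ' : ∀ n, β n ≤ Cβ := fun n => (le_abs_self _).trans (by simpa using hCβ n)
  have hβ0 : ∀ n, 0 ≤ β n := fun n => by
    have h1 := (abs_nonneg (f n 0)).trans (hgrowth n 0)
    nlinarith
  have hCβ0 : 0 ≤ Cβ := (hβ0 0).trans (hCβ' 0)
  have hM0 : 0 < M := lt_of_lt_of_le hα ((ha 0).1.trans (ha 0).2)
  set R : ℝ := Cx + 1 with hRdef
  have hR0 : (0 : ℝ) ≤ R := by simp only [hRdef]; linarith
  set D : ℝ := 2 + (R + 1) ^ 2 + R ^ 2 with hDdef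
  have hD0 : (0 : ℝ) ≤ D := by positivity
  obtain ⟨B, hB0, hB⟩ := compact_bound K hK 2
  obtain ⟨J₀, hJ₀⟩ := hconv_s 0 1 one_pos
  -- the summable majorant
  set G : ℝ := (M + 2 * (Cβ * D)) * B with hGdef
  have hG0 : 0 ≤ G := by
    have : (0 : ℝ) ≤ M + 2 * (Cβ * D) := by nlinarith
    exact mul_nonneg this hB0
  set v : ℕ → ℝ := fun n => G * (1 / ((n : ℝ) + 1) ^ 2) with hvdef
  have hsumv : Summable v := summable_inv_sq'.mul_left G
  -- choose N making the tail small
  obtain ⟨N, hN⟩ : ∃ N : ℕ, ∑' i : ℕ, v (i + N) < ε / 2 :=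
    ((tendsto_sum_nat_add v).eventually (gt_mem_nhds (half_pos hε))).exists
  -- choose δ for the head
  set δ : ℝ := ε / (2 * ((N : ℝ) + 1) * (B + 1)) with hδdef
  have hδ : 0 < δ := by
    have : (0 : ℝ) < 2 * ((N : ℝ) + 1) * (B + 1) := by positivity
    exact div_pos hε this
  -- pointwise convergence along j
  have hptw : ∀ n : ℕ, Tendsto (fun j => xj j n) atTop (𝓝 (x n)) := by
    intro n
    rw [Metric.tendsto_atTop]
    intro ε' hε'
    obtain ⟨J, hJ⟩ := hconv_s 0 (ε' / 2) (half_pos hε')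
    refine ⟨J, fun j hj => ?_⟩
    have := hJ j hj n
    rw [pow_zero, mul_one] at this
    rw [Real.dist_eq]
    linarith
  have hgt : ∀ n : ℕ, Tendsto (fun j => a n * xj j n + deriv (f n) (xj j n)) atTop
      (𝓝 (a n * x n + deriv (f n) (x n))) := by
    intro n
    have hc1 : Tendsto (fun j => a n * xj j n) atTop (𝓝 (a n * x n)) :=
      tendsto_const_nhds.mul (hptw n)
    have hc2 : Tendsto (fun j => deriv (f n) (xj j n)) atTop (𝓝 (deriv (f n) (x n))) :=
      (((hC1 n).continuous_deriv le_rfl).tendsto (x n)).comp (hptw n)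
    exact hc1.add hc2
  have hhead : ∀ᶠ j in atTop, ∀ n ∈ Finset.range N,
      |(a n * xj j n + deriv (f n) (xj j n)) - (a n * x n + deriv (f n) (x n))| ≤ δ := by
    rw [Filter.eventually_all_finset]
    intro n _
    have h0 : Tendsto (fun j => (a n * xj j n + deriv (f n) (xj j n)) -
        (a n * x n + deriv (f n) (x n))) atTop (𝓝 0) := by
      simpa using (hgt n).sub_const (a n * x n + deriv (f n) (x n))
    have := Metric.tendsto_nhds.mp h0 δ hδ
    filter_upwards [this] with j hjd
    rw [Real.dist_eq, sub_zero] at hjd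
    exact hjd.le
  obtain ⟨J, hJ⟩ := Filter.eventually_atTop.mp ((Filter.eventually_ge_atTop J₀).and hhead)
  refine ⟨J, fun j hj h hh => ?_⟩
  obtain ⟨hjJ₀, hhead'⟩ := hJ j hj
  set u : ℕ → ℝ := fun n => ((a n * xj j n + deriv (f n) (xj j n)) -
      (a n * x n + deriv (f n) (x n))) * (h : ℕ → ℝ) n with hudef
  -- bounds on h
  have hhn2 : ∀ n : ℕ, |(h : ℕ → ℝ) n| * ((n : ℝ) + 1) ^ 2 ≤ B := hB h hh
  have hone : ∀ n : ℕ, (1 : ℝ) ≤ ((n : ℝ) + 1) ^ 2 := by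
    intro n
    have h1n : (1 : ℝ) ≤ (n : ℝ) + 1 := by
      have := (Nat.cast_nonneg n : (0:ℝ) ≤ (n:ℝ))
      linarith
    have := pow_le_pow_left₀ (by norm_num : (0:ℝ) ≤ 1) h1n 2
    simpa using this
  have hhB : ∀ n : ℕ, |(h : ℕ → ℝ) n| ≤ B := by
    intro n
    have := hhn2 n
    nlinarith [abs_nonneg ((h : ℕ → ℝ) n), hone n]
  have hhBn : ∀ n : ℕ, |(h : ℕ → ℝ) n| ≤ B / ((n : ℝ) + 1) ^ 2 := by
    intro n
    have hp : (0 : ℝ) < ((n : ℝ) + 1) ^ 2 := by positivity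
    rw [le_div_iff₀ hp]
    exact hhn2 n
  -- uniform bounds along the sequence
  have hxjd : ∀ n : ℕ, |xj j n - x n| ≤ 1 := by
    intro n
    have := hJ₀ j hjJ₀ n
    rwa [pow_zero, mul_one] at this
  have hxb : ∀ n : ℕ, |x n| ≤ R := fun n => (hCx' n).trans (by simp [hRdef])
  have hxjb : ∀ n : ℕ, |xj j n| ≤ R := by
    intro n
    have h1 : |xj j n| ≤ |xj j n - x n| + |x n| := by
      simpa using abs_add_le (xj j n - x n) (x n)
    have := hCx' n
    have := hxjd n
    simp only [hRdef]
    linarith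
  have hderiv1 : ∀ n : ℕ, |deriv (f n) (xj j n)| ≤ β n * D := fun n =>
    deriv_abs_le_of_convex (f n) (hC1 n) (hconv n) (β n) R (hβ0 n) hR0
      (hgrowth n) (hxjb n)
  have hderiv2 : ∀ n : ℕ, |deriv (f n) (x n)| ≤ β n * D := fun n =>
    deriv_abs_le_of_convex (f n) (hC1 n) (hconv n) (β n) R (hβ0 n) hR0
      (hgrowth n) (hxb n)
  -- the key pointwise bound on differences
  have hdiff : ∀ n : ℕ, |(a n * xj j n + deriv (f n) (xj j n)) -
      (a n * x n + deriv (f n) (x n))| ≤ M + 2 * (Cβ * D) := by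
    intro n
    have e : (a n * xj j n + deriv (f n) (xj j n)) - (a n * x n + deriv (f n) (x n)) =
        a n * (xj j n - x n) + (deriv (f n) (xj j n) - deriv (f n) (x n)) := by ring
    have t1 : |a n * (xj j n - x n)| ≤ M := by
      rw [abs_mul]
      have haM : |a n| ≤ M := abs_le.mpr ⟨by linarith [(ha n).1], (ha n).2⟩
      calc |a n| * |xj j n - x n| ≤ M * 1 :=
            mul_le_mul haM (hxjd n) (abs_nonneg _) hM0.le
        _ = M := mul_one M
    have t2 : |deriv (f n) (xj j n) - deriv (f n) (x n)| ≤ β n * D + β n * D :=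
      (abs_sub _ _).trans (add_le_add (hderiv1 n) (hderiv2 n))
    have t3 : β n * D ≤ Cβ * D := mul_le_mul_of_nonneg_right (hCβ' n) hD0
    calc |(a n * xj j n + deriv (f n) (xj j n)) - (a n * x n + deriv (f n) (x n))|
        = |a n * (xj j n - x n) + (deriv (f n) (xj j n) - deriv (f n) (x n))| := by rw [e]
      _ ≤ |a n * (xj j n - x n)| + |deriv (f n) (xj j n) - deriv (f n) (x n)| := abs_add_le _ _
      _ ≤ M + (β n * D + β n * D) := add_le_add t1 t2
      _ ≤ M + 2 * (Cβ * D) := by linarith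
  have habs_u : ∀ n : ℕ, |u n| ≤ v n := by
    intro n
    have hM2 : (0 : ℝ) ≤ M + 2 * (Cβ * D) := by nlinarith
    calc |u n| = |(a n * xj j n + deriv (f n) (xj j n)) -
          (a n * x n + deriv (f n) (x n))| * |(h : ℕ → ℝ) n| := abs_mul _ _
      _ ≤ (M + 2 * (Cβ * D)) * (B / ((n : ℝ) + 1) ^ 2) :=
          mul_le_mul (hdiff n) (hhBn n) (abs_nonneg _) hM2
      _ = v n := by simp only [hvdef, hGdef]; ring
  have hsumau : Summable (fun n => |u n|) :=
    Summable.of_nonneg_of_le (fun n => abs_nonneg _) habs_u hsumv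
  have hsumu : Summable u := by
    refine Summable.of_norm ?_
    simpa [Real.norm_eq_abs] using hsumau
  -- final estimate
  have hmain : |∑' n : ℕ, u n| ≤ ∑' n : ℕ, |u n| := by
    have := norm_tsum_le_tsum_norm (f := u) (by simpa [Real.norm_eq_abs] using hsumau)
    simpa [Real.norm_eq_abs] using this
  have hsplit : (∑ i ∈ Finset.range N, |u i|) + ∑' i : ℕ, |u (i + N)| = ∑' i : ℕ, |u i| :=
    Summable.sum_add_tsum_nat_add N hsumau
  have hheadsum : (∑ i ∈ Finset.range N, |u i|) ≤ (N : ℝ) * (δ * B) := by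
    have hterm : ∀ i ∈ Finset.range N, |u i| ≤ δ * B := by
      intro i hi
      calc |u i| = |(a i * xj j i + deriv (f i) (xj j i)) -
            (a i * x i + deriv (f i) (x i))| * |(h : ℕ → ℝ) i| := abs_mul _ _
        _ ≤ δ * B := mul_le_mul (hhead' i hi) (hhB i) (abs_nonneg _) hδ.le
    calc (∑ i ∈ Finset.range N, |u i|) ≤ ∑ _i ∈ Finset.range N, δ * B :=
          Finset.sum_le_sum hterm
      _ = (N : ℝ) * (δ * B) := by
          rw [Finset.sum_const, Finset.card_range, nsmul_eq_mul]
  have hheadbound : (N : ℝ) * (δ * B) ≤ ε / 2 := by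
    have hpos : (0 : ℝ) < 2 * ((N : ℝ) + 1) * (B + 1) := by positivity
    have key : (N : ℝ) * B * ε ≤ ((N : ℝ) + 1) * (B + 1) * ε := by
      have hNn : (0 : ℝ) ≤ (N : ℝ) := Nat.cast_nonneg N
      nlinarith
    have e1 : (N : ℝ) * (δ * B) = ((N : ℝ) * B * ε) / (2 * ((N : ℝ) + 1) * (B + 1)) := by
      simp only [hδdef]; ring
    have e2 : ε / 2 = (((N : ℝ) + 1) * (B + 1) * ε) / (2 * ((N : ℝ) + 1) * (B + 1)) := by
      rw [eq_div_iff hpos.ne']; ring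
    rw [e1, e2]
    exact (div_le_div_iff_of_pos_right hpos).mpr key
  have htail : (∑' i : ℕ, |u (i + N)|) ≤ ∑' i : ℕ, v (i + N) :=
    Summable.tsum_le_tsum (fun i => habs_u (i + N))
      ((summable_nat_add_iff N).mpr hsumau) ((summable_nat_add_iff N).mpr hsumv)
  calc |∑' n : ℕ, u n|
      ≤ ∑' n : ℕ, |u n| := hmain
    _ = (∑ i ∈ Finset.range N, |u i|) + ∑' i : ℕ, |u (i + N)| := hsplit.symm
    _ ≤ (N : ℝ) * (δ * B) + ∑' i : ℕ, v (i + N) := add_le_add hheadsum htail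
    _ ≤ ε / 2 + ε / 2 := add_le_add hheadbound hN.le
    _ = ε := by ring
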